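/- arXiv:1606.07011 — 2 statements merged into one kernel-verified Lean document; each statement's English description precedes it below -/
import Mathlib

section
/- Let Ψ be the standard normal survival function. For any fixed real x, Ψ(u + x/u)/Ψ(u) → e^{-x} as u → ∞. -/
open Filter MeasureTheory
open Set Real

noncomputable def Psi (u : ℝ) : ℝ :=
  ∫ x in Set.Ioi u, (1 / Real.sqrt (2 * Real.pi)) * Real.exp (-x ^ 2 / 2)

noncomputable def Gg (v : ℝ) : ℝ := ∫ r in Ioi (0:ℝ), Real.exp (-r - r ^ 2 / (2 * v ^ 2))

lemma psi_eq (v : ℝ) (hv : 0 < v) :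
    Psi v = (1 / Real.sqrt (2 * Real.pi)) * Real.exp (-v ^ 2 / 2) * v⁻¹ * Gg v := by
  have h1 : Psi v = ∫ r in Ioi (0:ℝ),
      (1 / Real.sqrt (2 * Real.pi)) * Real.exp (-(r + v) ^ 2 / 2) := by
    rw [Psi]
    have := (measurePreserving_add_right (volume : Measure ℝ) v).setIntegral_preimage_emb
      (MeasurableEquiv.addRight v).measurableEmbedding
      (fun t => (1 / Real.sqrt (2 * Real.pi)) * Real.exp (-t ^ 2 / 2)) (Ioi v)
    rw [← this]
    congr 1
    simp
  have h2 : ∀ r : ℝ, (1 / Real.sqrt (2 * Real.pi)) * Real.exp (-(r + v) ^ 2 / 2)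
      = (1 / Real.sqrt (2 * Real.pi)) * Real.exp (-v ^ 2 / 2) * Real.exp (-(v * r) - r ^ 2 / 2) := by
    intro r
    rw [mul_assoc, ← Real.exp_add]
    ring_nf
  rw [h1]
  simp_rw [h2]
  rw [integral_const_mul]
  have h4 : ∫ r in Ioi (0:ℝ), Real.exp (-(v * r) - r ^ 2 / 2) = v⁻¹ * Gg v := by
    have h3 : ∀ r : ℝ, Real.exp (-(v * r) - r ^ 2 / 2)
        = (fun y => Real.exp (-y - y ^ 2 / (2 * v ^ 2))) (v * r) := by
      intro r
      simp only
      congr 1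
      field_simp
    calc ∫ r in Ioi (0:ℝ), Real.exp (-(v * r) - r ^ 2 / 2)
        = ∫ r in Ioi (0:ℝ), (fun y => Real.exp (-y - y ^ 2 / (2 * v ^ 2))) (v * r) := by
          exact setIntegral_congr_fun measurableSet_Ioi fun r _ => h3 r
      _ = v⁻¹ * Gg v := by
          have h5 := integral_comp_mul_left_Ioi
            (fun y => Real.exp (-y - y ^ 2 / (2 * v ^ 2))) 0 hv
          simp only [mul_zero, smul_eq_mul] at h5
          rw [h5, Gg]
  rw [h4]
  ring

lemma Gg_cont (v : ℝ) : Continuous fun r : ℝ => Real.exp (-r - r ^ 2 / (2 * v ^ 2)) := by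
  fun_prop

lemma Gg_bound (v r : ℝ) : ‖Real.exp (-r - r ^ 2 / (2 * v ^ 2))‖ ≤ Real.exp (-r) := by
  rw [Real.norm_eq_abs, abs_of_pos (Real.exp_pos _)]
  apply Real.exp_le_exp.2
  have : 0 ≤ r ^ 2 / (2 * v ^ 2) := div_nonneg (sq_nonneg r) (by positivity)
  linarith

lemma exp_neg_int : IntegrableOn (fun r : ℝ => Real.exp (-r)) (Ioi 0) := by
  simpa using exp_neg_integrableOn_Ioi 0 one_pos

lemma Gg_integrable (v : ℝ) :
    IntegrableOn (fun r : ℝ => Real.exp (-r - r ^ 2 / (2 * v ^ 2))) (Ioi 0) := by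
  exact Integrable.mono' exp_neg_int ((Gg_cont v).aestronglyMeasurable)
    (Filter.Eventually.of_forall fun r => Gg_bound v r)

lemma Gg_pos (v : ℝ) : 0 < Gg v := by
  rw [Gg, setIntegral_pos_iff_support_of_nonneg_ae]
  · have : Function.support (fun r : ℝ => Real.exp (-r - r ^ 2 / (2 * v ^ 2))) = Set.univ := by
      ext r; simp [Function.mem_support, (Real.exp_pos _).ne']
    rw [this]
    simp
  · exact Filter.Eventually.of_forall fun r => (Real.exp_pos _).le
  · exact Gg_integrable v

lemma Gg_tendsto : Tendsto Gg atTop (nhds 1) := by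
  have h : Tendsto (fun v : ℝ => ∫ r in Ioi (0:ℝ), Real.exp (-r - r ^ 2 / (2 * v ^ 2)))
      atTop (nhds (∫ r in Ioi (0:ℝ), Real.exp (-r))) := by
    apply tendsto_integral_filter_of_dominated_convergence (fun r => Real.exp (-r))
    · exact Filter.Eventually.of_forall fun v => (Gg_cont v).aestronglyMeasurable
    · exact Filter.Eventually.of_forall fun v =>
        Filter.Eventually.of_forall fun r => Gg_bound v r
    · exact exp_neg_int
    · refine Filter.Eventually.of_forall fun r => ?_
      have h1 : Tendsto (fun v : ℝ => r ^ 2 / (2 * v ^ 2)) atTop (nhds 0) := by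
        apply Tendsto.div_atTop tendsto_const_nhds
        exact (tendsto_pow_atTop two_ne_zero).const_mul_atTop two_pos
      have h2 : Tendsto (fun v : ℝ => -r - r ^ 2 / (2 * v ^ 2)) atTop (nhds (-r - 0)) :=
        tendsto_const_nhds.sub h1
      simpa [Function.comp_def] using (Real.continuous_exp.tendsto _).comp h2
  rw [integral_exp_neg_Ioi_zero] at h
  exact h

theorem psi_shift_ratio (x : ℝ) :
    Tendsto (fun u : ℝ => Psi (u + x / u) / Psi u) atTop (nhds (Real.exp (-x))) := by
  have hsq : Tendsto (fun u : ℝ => u ^ 2) atTop atTop := tendsto_pow_atTop two_ne_zero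
  have hx2 : Tendsto (fun u : ℝ => x ^ 2 / (2 * u ^ 2)) atTop (nhds 0) :=
    Tendsto.div_atTop tendsto_const_nhds (hsq.const_mul_atTop two_pos)
  have hv_top : Tendsto (fun u : ℝ => u + x / u) atTop atTop := by
    apply tendsto_atTop_add_right_of_le' atTop (-|x|) tendsto_id
    filter_upwards [eventually_ge_atTop (1:ℝ)] with u hu1
    have hu0 : (0:ℝ) < u := lt_of_lt_of_le one_pos hu1
    have h1 : -(|x| / u) ≤ x / u := by
      rw [← neg_div]; exact (div_le_div_iff_of_pos_right hu0).2 (neg_abs_le x)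
    have h2 : |x| / u ≤ |x| := div_le_self (abs_nonneg x) hu1
    linarith
  have hA : Tendsto (fun u : ℝ => Real.exp (-x - x ^ 2 / (2 * u ^ 2))) atTop
      (nhds (Real.exp (-x))) := by
    have h2 : Tendsto (fun u : ℝ => -x - x ^ 2 / (2 * u ^ 2)) atTop (nhds (-x - 0)) :=
      tendsto_const_nhds.sub hx2
    simpa [Function.comp_def] using (Real.continuous_exp.tendsto _).comp h2
  have hB : Tendsto (fun u : ℝ => u * (u + x / u)⁻¹) atTop (nhds 1) := by
    have hx2' : Tendsto (fun u : ℝ => x / u ^ 2) atTop (nhds 0) :=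
      Tendsto.div_atTop tendsto_const_nhds hsq
    have h1 : Tendsto (fun u : ℝ => (1 + x / u ^ 2)⁻¹) atTop (nhds 1) := by
      have := ((tendsto_const_nhds.add hx2').inv₀ (by norm_num : (1:ℝ) + 0 ≠ 0))
      simpa using this
    apply Tendsto.congr' _ h1
    filter_upwards [eventually_ge_atTop (|x| + 1)] with u hu
    have hu1 : (1:ℝ) ≤ u := by linarith [abs_nonneg x]
    have hu0 : (0:ℝ) < u := lt_of_lt_of_le one_pos hu1
    have hne : 1 + x / u ^ 2 ≠ 0 := by
      have h2 : |x / u ^ 2| < 1 := by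
        rw [abs_div, abs_of_pos (by positivity : (0:ℝ) < u ^ 2)]
        rw [div_lt_one (by positivity)]
        nlinarith [abs_nonneg x]
      intro h
      rw [abs_lt] at h2
      linarith
    have : u + x / u = u * (1 + x / u ^ 2) := by field_simp
    rw [this, mul_inv, ← mul_assoc, mul_inv_cancel₀ hu0.ne', one_mul]
  have hC : Tendsto (fun u : ℝ => Gg (u + x / u) / Gg u) atTop (nhds 1) := by
    have := (Gg_tendsto.comp hv_top).div Gg_tendsto one_ne_zero
    simpa [Function.comp_def, Pi.div_def] using this
  have hTot : Tendsto (fun u : ℝ => Real.exp (-x - x ^ 2 / (2 * u ^ 2)) *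
      (u * (u + x / u)⁻¹) * (Gg (u + x / u) / Gg u)) atTop
      (nhds (Real.exp (-x) * 1 * 1)) := (hA.mul hB).mul hC
  rw [mul_one, mul_one] at hTot
  apply Tendsto.congr' _ hTot
  filter_upwards [eventually_ge_atTop (|x| + 1)] with u hu
  have hu1 : (1:ℝ) ≤ u := by linarith [abs_nonneg x]
  have hu0 : (0:ℝ) < u := lt_of_lt_of_le one_pos hu1
  have hxu : |x| / u ≤ |x| := div_le_self (abs_nonneg x) hu1
  have hxu2 : -(|x| / u) ≤ x / u := by
    rw [← neg_div]; exact (div_le_div_iff_of_pos_right hu0).2 (neg_abs_le x)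
  have hv0 : 0 < u + x / u := by
    have : -(|x|) ≤ x / u := le_trans (by linarith) hxu2
    nlinarith [abs_nonneg x]
  rw [psi_eq _ hv0, psi_eq _ hu0]
  have hexp : Real.exp (-(u + x / u) ^ 2 / 2)
      = Real.exp (-x - x ^ 2 / (2 * u ^ 2)) * Real.exp (-u ^ 2 / 2) := by
    rw [← Real.exp_add]
    congr 1
    field_simp
    ring
  rw [hexp]
  have hGu := (Gg_pos u).ne'
  have hGv := (Gg_pos (u + x / u)).ne'
  have hsqrt : Real.sqrt (2 * Real.pi) ≠ 0 := by positivity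
  have he1 := Real.exp_ne_zero (-u ^ 2 / 2)
  have he2 := Real.exp_ne_zero (-x - x ^ 2 / (2 * u ^ 2))
  have hvne : u + x / u ≠ 0 := hv0.ne'
  have hune : u ≠ 0 := hu0.ne'
  have hCpos : 0 < 1 / Real.sqrt (2 * Real.pi) := by positivity
  have hden : 0 < 1 / Real.sqrt (2 * Real.pi) * Real.exp (-u ^ 2 / 2) * u⁻¹ * Gg u :=
    mul_pos (mul_pos (mul_pos hCpos (Real.exp_pos _)) (inv_pos.2 hu0)) (Gg_pos u)
  rw [eq_div_iff hden.ne']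
  set v := u + x / u with hv
  set A := Gg v with hA'
  set B := Gg u with hB'
  field_simp
end

section
/- Fix γ > 0, c > 0, q > 1, and ς > 0. Then u^{2/ς} · Ψ(u·(1 + c·u^{−2}(ln u)^q)) = o(Ψ(u)) as u → ∞, where Ψ is the standard normal survival function. -/
open Filter MeasureTheory Asymptotics Set Real Topology

lemma gauss_integrable : Integrable (fun x : ℝ => 1 / Real.sqrt (2 * Real.pi) * Real.exp (-x ^ 2 / 2)) := by
  have h := (integrable_exp_neg_mul_sq (by norm_num : (0:ℝ) < 1/2)).const_mul
    (1 / Real.sqrt (2 * Real.pi))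
  convert h using 2 with x
  ring_nf

lemma gauss_pos (x : ℝ) : 0 < 1 / Real.sqrt (2 * Real.pi) * Real.exp (-x ^ 2 / 2) := by
  have : 0 < Real.sqrt (2 * Real.pi) := Real.sqrt_pos.2 (by positivity)
  positivity

lemma xexp_deriv (x : ℝ) :
    HasDerivAt (fun x : ℝ => -Real.exp (-x ^ 2 / 2)) (x * Real.exp (-x ^ 2 / 2)) x := by
  have h1 : HasDerivAt (fun x : ℝ => -x ^ 2 / 2) (-x) x := by
    have := ((hasDerivAt_pow 2 x).neg).div_const 2
    simpa using this.congr_deriv (by push_cast; ring)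
  have := (h1.exp).neg
  exact this.congr_deriv (by ring)

lemma exp_tendsto : Tendsto (fun x : ℝ => -Real.exp (-x ^ 2 / 2)) atTop (𝓝 0) := by
  have h1 : Tendsto (fun x : ℝ => -x ^ 2 / 2) atTop atBot := by
    apply Tendsto.atBot_div_const (by norm_num : (0:ℝ) < 2)
    exact tendsto_neg_atBot_iff.mpr (tendsto_pow_atTop two_ne_zero)
  have := (Real.tendsto_exp_atBot.comp h1).neg
  simpa using this

lemma xexp_integrableOn {v : ℝ} (hv : 0 < v) :
    IntegrableOn (fun x : ℝ => x * Real.exp (-x ^ 2 / 2)) (Ioi v) := by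
  apply integrableOn_Ioi_deriv_of_nonneg' (g := fun x : ℝ => -Real.exp (-x ^ 2 / 2))
    (fun x _ => xexp_deriv x) ?_ exp_tendsto
  intro x hx
  have : (0:ℝ) < x := hv.trans hx
  positivity

lemma xexp_integral {v : ℝ} (hv : 0 < v) :
    ∫ x in Ioi v, x * Real.exp (-x ^ 2 / 2) = Real.exp (-v ^ 2 / 2) := by
  have := integral_Ioi_of_hasDerivAt_of_nonneg' (g := fun x : ℝ => -Real.exp (-x ^ 2 / 2))
    (fun x _ => xexp_deriv x) (fun x hx => by
      have : (0:ℝ) < x := hv.trans hx; positivity) exp_tendsto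
  simpa using this

lemma psi_pos (u : ℝ) : 0 < Psi u := by
  rw [Psi, setIntegral_pos_iff_support_of_nonneg_ae
    (ae_of_all _ fun x => (gauss_pos x).le) gauss_integrable.integrableOn]
  have : (Function.support fun x : ℝ => 1 / Real.sqrt (2 * Real.pi) * Real.exp (-x ^ 2 / 2)) = Set.univ := by
    ext x
    simp only [Function.mem_support, Set.mem_univ, iff_true]
    exact (gauss_pos x).ne'
  rw [this, Set.univ_inter]
  simp [Real.volume_Ioi]

lemma psi_upper {v : ℝ} (hv : 0 < v) :
    Psi v ≤ 1 / Real.sqrt (2 * Real.pi) * Real.exp (-v ^ 2 / 2) / v := by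
  have key : Psi v ≤ ∫ x in Ioi v, (1 / Real.sqrt (2 * Real.pi) / v) * (x * Real.exp (-x ^ 2 / 2)) := by
    rw [Psi]
    apply setIntegral_mono_on gauss_integrable.integrableOn
      ((xexp_integrableOn hv).const_mul _) measurableSet_Ioi
    intro x hx
    have hx' : v ≤ x := (le_of_lt hx)
    have h0 : 0 < Real.sqrt (2 * Real.pi) := Real.sqrt_pos.2 (by positivity)
    have hev : 0 < Real.exp (-x ^ 2 / 2) := Real.exp_pos _
    have hC : 0 < 1 / Real.sqrt (2 * Real.pi) := by positivity
    have heq : 1 / Real.sqrt (2 * Real.pi) / v * (x * Real.exp (-x ^ 2 / 2))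
        = (1 / Real.sqrt (2 * Real.pi) * Real.exp (-x ^ 2 / 2)) * (x / v) := by
      field_simp
    rw [heq]
    nth_rewrite 1 [← mul_one (1 / Real.sqrt (2 * Real.pi) * Real.exp (-x ^ 2 / 2))]
    apply mul_le_mul_of_nonneg_left _ (by positivity)
    rw [le_div_iff₀ hv]
    linarith
  rw [MeasureTheory.integral_const_mul, xexp_integral hv] at key
  calc Psi v ≤ _ := key
  _ = 1 / Real.sqrt (2 * Real.pi) * Real.exp (-v ^ 2 / 2) / v := by ring

lemma psi_lower {u : ℝ} (hu : 1 ≤ u) :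
    1 / Real.sqrt (2 * Real.pi) * Real.exp (-u ^ 2 / 2) * Real.exp (-2) / u ≤ Psi u := by
  have hu0 : 0 < u := lt_of_lt_of_le one_pos hu
  have h1 : (∫ x in Ioc u (u + 1/u), (1 / Real.sqrt (2 * Real.pi)) * Real.exp (-x ^ 2 / 2)) ≤ Psi u := by
    rw [Psi]
    apply setIntegral_mono_set gauss_integrable.integrableOn
      (ae_of_all _ fun x => (gauss_pos x).le)
    exact HasSubset.Subset.eventuallyLE (fun x hx => hx.1)
  have h2 : (1 / Real.sqrt (2 * Real.pi) * Real.exp (-(u + 1/u) ^ 2 / 2)) * (volume (Ioc u (u + 1/u))).toReal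
      ≤ ∫ x in Ioc u (u + 1/u), (1 / Real.sqrt (2 * Real.pi)) * Real.exp (-x ^ 2 / 2) := by
    apply setIntegral_ge_of_const_le_real measurableSet_Ioc (by simp)
    · intro x hx
      have hxu : u < x := hx.1
      have hx2 : x ^ 2 ≤ (u + 1/u) ^ 2 := by
        apply sq_le_sq' _ hx.2
        have : 0 < 1/u := by positivity
        nlinarith
      have h0 : 0 < Real.sqrt (2 * Real.pi) := Real.sqrt_pos.2 (by positivity)
      have := Real.exp_le_exp.2 (by linarith : -(u + 1/u) ^ 2/2 ≤ -x ^ 2/2)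
      have : 0 ≤ 1 / Real.sqrt (2 * Real.pi) := by positivity
      nlinarith [Real.exp_le_exp.2 (by linarith : -(u + 1/u) ^ 2/2 ≤ -x ^ 2/2)]
    · exact gauss_integrable.integrableOn
  have hvol : (volume (Ioc u (u + 1/u))).toReal = 1/u := by
    rw [Real.volume_Ioc, ENNReal.toReal_ofReal (by nlinarith [one_div_pos.mpr hu0])]
    ring
  rw [hvol] at h2
  have h3 : 1 / Real.sqrt (2 * Real.pi) * Real.exp (-u ^ 2 / 2) * Real.exp (-2) / u
      ≤ 1 / Real.sqrt (2 * Real.pi) * Real.exp (-(u + 1/u) ^ 2 / 2) * (1/u) := by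
    have h0 : 0 < Real.sqrt (2 * Real.pi) := Real.sqrt_pos.2 (by positivity)
    have he : Real.exp (-u ^ 2 / 2) * Real.exp (-2) ≤ Real.exp (-(u + 1/u) ^ 2 / 2) := by
      rw [← Real.exp_add, Real.exp_le_exp]
      have : 1 / u ≤ 1 := by rw [div_le_one hu0]; exact hu
      have h5 : 0 < 1/u := by positivity
      have h4 : (1/u)^2 ≤ 1 := by nlinarith
      have hinv : u * (1/u) = 1 := by field_simp
      nlinarith
    rw [div_eq_mul_one_div]
    apply mul_le_mul_of_nonneg_right _ (by positivity)
    calc 1 / Real.sqrt (2 * Real.pi) * Real.exp (-u ^ 2 / 2) * Real.exp (-2)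
        = 1 / Real.sqrt (2 * Real.pi) * (Real.exp (-u ^ 2 / 2) * Real.exp (-2)) := by ring
      _ ≤ _ := by apply mul_le_mul_of_nonneg_left he (by positivity)
  linarith

lemma exp_ratio_tendsto (a c q : ℝ) (hc : 0 < c) (hq : 1 < q) :
    Tendsto (fun u : ℝ => Real.exp (a * Real.log u - c * Real.log u ^ q)) atTop (𝓝 0) := by
  have h3 : Tendsto (fun L : ℝ => c * L ^ (q - 1)) atTop atTop :=
    (tendsto_rpow_atTop (by linarith)).const_mul_atTop hc
  have h4 : Tendsto (fun L : ℝ => a - c * L ^ (q - 1)) atTop atBot := by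
    have := tendsto_atBot_add_const_left (f := fun L : ℝ => -(c * L ^ (q - 1))) atTop a
      (tendsto_neg_atBot_iff.mpr h3)
    simpa [sub_eq_add_neg] using this
  have h2 : Tendsto (fun L : ℝ => L * (a - c * L ^ (q - 1))) atTop atBot :=
    Tendsto.atTop_mul_atBot₀ tendsto_id h4
  have h1 : Tendsto (fun L : ℝ => a * L - c * L ^ q) atTop atBot := by
    apply h2.congr'
    filter_upwards [eventually_gt_atTop (0:ℝ)] with L hL
    rw [Real.rpow_sub hL, Real.rpow_one]
    field_simp
  exact Real.tendsto_exp_atBot.comp (h1.comp Real.tendsto_log_atTop)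

theorem psi_littleo (γ c q ς : ℝ) (hγ : 0 < γ) (hc : 0 < c) (hq : 1 < q) (hς : 0 < ς) :
    (fun u : ℝ => u ^ (2 / ς) * Psi (u * (1 + c * u ^ (-2 : ℝ) * Real.log u ^ q)))
      =o[atTop] Psi := by
  have hψ : ∀ u, 0 < Psi u := psi_pos
  apply isLittleO_of_tendsto (fun u h => absurd h (hψ u).ne')
  have hg0 : Tendsto (fun u : ℝ =>
      Real.exp 2 * Real.exp ((2/ς) * Real.log u - c * Real.log u ^ q)) atTop (𝓝 0) := by
    have := (exp_ratio_tendsto (2/ς) c q hc hq).const_mul (Real.exp 2)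
    simpa using this
  apply squeeze_zero' ?_ ?_ hg0
  · filter_upwards [eventually_ge_atTop (0:ℝ)] with u hu
    exact div_nonneg (mul_nonneg (Real.rpow_nonneg hu _) (hψ _).le) (hψ u).le
  · filter_upwards [eventually_ge_atTop (3:ℝ)] with u hu
    have hu1 : (1:ℝ) ≤ u := by linarith
    have hu0 : (0:ℝ) < u := by linarith
    have hL : 1 ≤ Real.log u := by
      rw [Real.le_log_iff_exp_le hu0]
      have := Real.exp_one_lt_d9
      linarith
    have hL0 : 0 ≤ Real.log u := by linarith
    have hLq : 0 ≤ Real.log u ^ q := Real.rpow_nonneg hL0 _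
    have hA0 : 0 ≤ u ^ (-2:ℝ) := Real.rpow_nonneg hu0.le _
    have hδ : 0 ≤ c * u ^ (-2:ℝ) * Real.log u ^ q :=
      mul_nonneg (mul_nonneg hc.le hA0) hLq
    set δ : ℝ := c * u ^ (-2:ℝ) * Real.log u ^ q with hδdef
    set v : ℝ := u * (1 + δ) with hvdef
    have hv : u ≤ v := le_mul_of_one_le_right hu0.le (by linarith)
    have hv0 : 0 < v := lt_of_lt_of_le hu0 hv
    have h0 : 0 < Real.sqrt (2 * Real.pi) := Real.sqrt_pos.2 (by positivity)
    have hud : u ^ 2 * δ = c * Real.log u ^ q := by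
      have hr : u ^ (2:ℕ) * u ^ (-2:ℝ) = 1 := by
        rw [← Real.rpow_natCast u 2, ← Real.rpow_add hu0]
        norm_num
      calc u ^ 2 * δ = c * Real.log u ^ q * (u ^ (2:ℕ) * u ^ (-2:ℝ)) := by
            rw [hδdef]; ring
        _ = c * Real.log u ^ q := by rw [hr, mul_one]
    have hvsq : u ^ 2 / 2 + c * Real.log u ^ q ≤ v ^ 2 / 2 := by
      have hδsq : 0 ≤ u ^ 2 * δ ^ 2 := by positivity
      nlinarith [hud, hδ]
    -- upper bound on Psi v
    have hexp : Real.exp (-v ^ 2 / 2) ≤ Real.exp (-u ^ 2 / 2) * Real.exp (-(c * Real.log u ^ q)) := by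
      rw [← Real.exp_add]
      apply Real.exp_le_exp.2
      linarith
    have hU : Psi v ≤ 1 / Real.sqrt (2 * Real.pi) * (Real.exp (-u ^ 2 / 2) * Real.exp (-(c * Real.log u ^ q))) / u := by
      calc Psi v ≤ 1 / Real.sqrt (2 * Real.pi) * Real.exp (-v ^ 2 / 2) / v := psi_upper hv0
        _ ≤ 1 / Real.sqrt (2 * Real.pi) * Real.exp (-v ^ 2 / 2) / u :=
            div_le_div_of_nonneg_left (by positivity) hu0 hv
        _ ≤ _ := by
            apply div_le_div_of_nonneg_right ?_ hu0.le
            exact mul_le_mul_of_nonneg_left hexp (by positivity)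
    have hLo := psi_lower hu1
    have hLo0 : 0 < 1 / Real.sqrt (2 * Real.pi) * Real.exp (-u ^ 2 / 2) * Real.exp (-2) / u := by
      positivity
    have hf0 : 0 ≤ u ^ (2/ς) * Psi v := mul_nonneg (Real.rpow_nonneg hu0.le _) (hψ _).le
    calc u ^ (2/ς) * Psi v / Psi u
        ≤ u ^ (2/ς) * Psi v / (1 / Real.sqrt (2 * Real.pi) * Real.exp (-u ^ 2 / 2) * Real.exp (-2) / u) :=
          div_le_div_of_nonneg_left hf0 hLo0 hLo
      _ ≤ u ^ (2/ς) * (1 / Real.sqrt (2 * Real.pi) * (Real.exp (-u ^ 2 / 2) * Real.exp (-(c * Real.log u ^ q))) / u)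
            / (1 / Real.sqrt (2 * Real.pi) * Real.exp (-u ^ 2 / 2) * Real.exp (-2) / u) := by
          apply (div_le_div_iff_of_pos_right hLo0).2
          exact mul_le_mul_of_nonneg_left hU (Real.rpow_nonneg hu0.le _)
      _ = Real.exp 2 * Real.exp ((2/ς) * Real.log u - c * Real.log u ^ q) := by
          rw [Real.rpow_def_of_pos hu0]
          have e1 : Real.exp ((2/ς) * Real.log u - c * Real.log u ^ q)
              = Real.exp (Real.log u * (2/ς)) * Real.exp (-(c * Real.log u ^ q)) := by
            rw [← Real.exp_add]; congr 1; ring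
          rw [e1, Real.exp_neg 2]
          field_simp
end
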